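/- Let n ≥ 1, let f : ℝⁿ → ℝ be lower semicontinuous, let x ∈ S^{n−1}, and let v ∈ ℝⁿ be a regular subgradient of f at x (i.e., liminf_{y → x, y ≠ x} (f(y) − f(x) − ⟨v, y − x⟩)/‖y − x‖ ≥ 0). Then the projection Proj_x(v) = v − ⟨v, x⟩x is a Riemannian Fréchet subgradient of f at x on the sphere: there exist δ > 0 and h : ℝⁿ → ℝ continuously differentiable on the open ball of radius δ centered at x such that f − h attains a local minimum at x relative to S^{n−1} and Proj_x(∇h(x)) = v − ⟨v, x⟩x. -/

import Mathlib

open Filter Topology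
open intervalIntegral Set

/-- The orthogonal projection onto the tangent space of the unit sphere at `x`:
`Proj_x(v) = v − ⟨v, x⟩x`. -/
noncomputable def sphereProj {n : ℕ} (x v : EuclideanSpace ℝ (Fin n)) :
    EuclideanSpace ℝ (Fin n) :=
  v - (inner ℝ v x : ℝ) • x

/-- `v` is a regular subgradient of `f` at `x̄`:
`liminf_{y → x̄, y ≠ x̄} (f(y) − f(x̄) − ⟨v, y − x̄⟩)/‖y − x̄‖ ≥ 0`. -/
def IsRegularSubgradient {n : ℕ} (f : EuclideanSpace ℝ (Fin n) → ℝ)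
    (x v : EuclideanSpace ℝ (Fin n)) : Prop :=
  ∀ ε > (0 : ℝ), ∃ δ > (0 : ℝ), ∀ y, y ≠ x → ‖y - x‖ < δ →
    -ε * ‖y - x‖ ≤ f y - f x - (inner ℝ v (y - x) : ℝ)

/-- `v` is a Riemannian Fréchet subgradient of `f` at `x` on the unit sphere: there exist
`δ > 0` and `h` continuously differentiable on the open ball of radius `δ` centered at `x`
such that `f − h` attains a local minimum at `x` relative to the sphere and
`v = Proj_x(∇h(x))`. -/
def IsRFrechetSubgradient {n : ℕ} (f : EuclideanSpace ℝ (Fin n) → ℝ)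
    (x v : EuclideanSpace ℝ (Fin n)) : Prop :=
  ∃ δ > (0 : ℝ), ∃ h : EuclideanSpace ℝ (Fin n) → ℝ,
    ContDiffOn ℝ 1 h (Metric.ball x δ) ∧
    (∃ ε > (0 : ℝ), ∀ y, ‖y‖ = 1 → ‖y - x‖ < ε → f x - h x ≤ f y - h y) ∧
    v = sphereProj x (gradient h x)



/-- From a monotone "modulus" `A` that is `0` on nonpositives, bounded by `1`, and tends to `0`
at `0`, construct a `C¹` penalty function `φ` with continuous derivative `c`, `φ 0 = 0`,
`c 0 = 0`, `φ t ≥ t * A t` for `t > 0`, and `φ t = o(t)` at `0`. -/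
lemma exists_penalty (A : ℝ → ℝ) (hmono : Monotone A) (hzero : ∀ t ≤ (0:ℝ), A t = 0)
    (hnonneg : ∀ t, 0 ≤ A t) (hone : ∀ t, A t ≤ 1)
    (hlim : ∀ ε > (0:ℝ), ∃ δ > (0:ℝ), ∀ t < δ, A t ≤ ε) :
    ∃ φ c : ℝ → ℝ, Continuous c ∧ (∀ t, HasDerivAt φ (c t) t) ∧ φ 0 = 0 ∧ c 0 = 0 ∧
      (∀ t, 0 ≤ c t) ∧ (∀ t, 0 ≤ t → 0 ≤ φ t) ∧ (∀ t, 0 < t → t * A t ≤ φ t) ∧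
      (∀ ε > (0:ℝ), ∃ δ > (0:ℝ), ∀ t, 0 ≤ t → t < δ → φ t ≤ ε * t) := by
  have hInt : ∀ a b : ℝ, IntervalIntegrable A MeasureTheory.volume a b := fun a b =>
    (hmono.monotoneOn _).intervalIntegrable
  set F : ℝ → ℝ := fun t => ∫ s in (0:ℝ)..t, A s with hF_def
  have hFcont : Continuous F := intervalIntegral.continuous_primitive hInt 0
  set g₁ : ℝ → ℝ := fun t => t⁻¹ * ∫ s in t..(2*t), A s with hg₁_def
  have hg₁_eq : ∀ t, g₁ t = t⁻¹ * (F (2*t) - F t) := by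
    intro t
    have : F (2*t) - F t = ∫ s in t..(2*t), A s := by
      rw [hF_def]
      exact integral_interval_sub_left (hInt 0 (2*t)) (hInt 0 t)
    rw [hg₁_def]; simp only [this]
  have hg₁_zero : ∀ t ≤ (0:ℝ), g₁ t = 0 := by
    intro t ht
    have hint : (∫ s in t..(2*t), A s) = 0 := by
      have : EqOn A 0 (uIcc t (2*t)) := by
        intro s hs
        have hs' : s ≤ 0 := by
          rcases hs with ⟨h1, h2⟩
          have : max t (2*t) ≤ 0 := by
            apply max_le ht; linarith
          exact le_trans h2 this
        simpa using hzero s hs'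
      rw [integral_congr this]; simp
    simp [hg₁_def, hint]
  have hg₁_nonneg : ∀ t, 0 ≤ g₁ t := by
    intro t
    rcases le_or_gt t 0 with ht | ht
    · rw [hg₁_zero t ht]
    · apply mul_nonneg (by positivity)
      apply integral_nonneg (by linarith)
      intro u _; exact hnonneg u
  have hg₁_le : ∀ t, 0 < t → g₁ t ≤ A (2*t) := by
    intro t ht
    have h1 : (∫ s in t..(2*t), A s) ≤ ∫ _s in t..(2*t), A (2*t) := by
      apply integral_mono_on (by linarith) (hInt _ _) intervalIntegrable_const
      intro s hs; exact hmono hs.2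
    rw [hg₁_def]
    simp only
    rw [inv_mul_le_iff₀ ht]
    calc (∫ s in t..(2*t), A s) ≤ ∫ _s in t..(2*t), A (2*t) := h1
      _ = t * A (2*t) := by rw [intervalIntegral.integral_const, smul_eq_mul]; ring
  have hg₁_ge : ∀ t, 0 < t → A t ≤ g₁ t := by
    intro t ht
    have h1 : (∫ _s in t..(2*t), A t) ≤ ∫ s in t..(2*t), A s := by
      apply integral_mono_on (by linarith) intervalIntegrable_const (hInt _ _)
      intro s hs; exact hmono hs.1
    rw [hg₁_def]
    simp only
    rw [le_inv_mul_iff₀ ht]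
    calc t * A t = ∫ _s in t..(2*t), A t := by rw [intervalIntegral.integral_const, smul_eq_mul]; ring
      _ ≤ _ := h1
  have hg₁_cont : Continuous g₁ := by
    rw [continuous_iff_continuousAt]
    intro t
    rcases eq_or_ne t 0 with rfl | ht
    · -- continuity at 0 by squeeze
      have h0 : g₁ 0 = 0 := hg₁_zero 0 le_rfl
      rw [ContinuousAt, h0]
      rw [Metric.tendsto_nhds]
      intro ε hε
      obtain ⟨δ, hδ, hδ'⟩ := hlim (ε/2) (by linarith)
      have : ∀ s : ℝ, |s| < δ/2 → dist (g₁ s) 0 < ε := by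
        intro s hs
        rw [Real.dist_eq, sub_zero]
        rcases le_or_gt s 0 with h | h
        · rw [hg₁_zero s h]; simpa using hε
        · have : g₁ s ≤ A (2*s) := hg₁_le s h
          have h2 : A (2*s) ≤ ε/2 := by
            apply hδ'
            have := abs_lt.1 hs
            linarith [this.2]
          rw [abs_of_nonneg (hg₁_nonneg s)]
          linarith
      filter_upwards [Metric.ball_mem_nhds (0:ℝ) (by positivity : (0:ℝ) < δ/2)] with s hs
      exact this s (by simpa [Real.dist_eq] using hs)
    · have : ContinuousAt (fun t => t⁻¹ * (F (2*t) - F t)) t := by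
        apply ContinuousAt.mul (continuousAt_inv₀ ht)
        exact ((hFcont.comp (continuous_const.mul continuous_id)).sub hFcont).continuousAt
      have heq : g₁ = fun t => t⁻¹ * (F (2*t) - F t) := funext hg₁_eq
      rw [heq]; exact this
  set c : ℝ → ℝ := fun s => 2 * g₁ (2*s) with hc_def
  have hc_cont : Continuous c :=
    continuous_const.mul (hg₁_cont.comp (continuous_const.mul continuous_id))
  have hc_nonneg : ∀ s, 0 ≤ c s := fun s => mul_nonneg zero_le_two (hg₁_nonneg (2*s))
  have hc0 : c 0 = 0 := by simp [hc_def, hg₁_zero 0 le_rfl]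
  set φ : ℝ → ℝ := fun t => ∫ s in (0:ℝ)..t, c s with hφ_def
  have hφderiv : ∀ t, HasDerivAt φ (c t) t := fun t =>
    (hc_cont.integral_hasStrictDerivAt 0 t).hasDerivAt
  have hφ0 : φ 0 = 0 := integral_same
  have hφ_nonneg : ∀ t, 0 ≤ t → 0 ≤ φ t := by
    intro t ht
    apply integral_nonneg ht
    intro u _; exact hc_nonneg u
  have hφ_lb : ∀ t, 0 < t → t * A t ≤ φ t := by
    intro t ht
    have hsplit : φ t = (∫ s in (0:ℝ)..(t/2), c s) + ∫ s in (t/2)..t, c s := by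
      rw [hφ_def]
      exact (integral_add_adjacent_intervals (hc_cont.intervalIntegrable _ _)
        (hc_cont.intervalIntegrable _ _)).symm
    have h1 : 0 ≤ ∫ s in (0:ℝ)..(t/2), c s :=
      integral_nonneg (by linarith) (fun u _ => hc_nonneg u)
    have h2 : (∫ _s in (t/2)..t, 2 * A t) ≤ ∫ s in (t/2)..t, c s := by
      apply integral_mono_on (by linarith) intervalIntegrable_const
        (hc_cont.intervalIntegrable _ _)
      intro s hs
      have hs1 : t/2 ≤ s := hs.1
      have hs2 : 0 < 2*s := by linarith
      calc 2 * A t ≤ 2 * A (2*s) := by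
            have := hmono (show t ≤ 2*s by linarith); linarith
        _ ≤ 2 * g₁ (2*s) := by have := hg₁_ge (2*s) hs2; linarith
        _ = c s := rfl
    have h2' : (∫ _s in (t/2)..t, 2 * A t) = t * A t := by
      rw [intervalIntegral.integral_const, smul_eq_mul]; ring
    rw [hsplit]
    linarith [h2, h2'.symm ▸ h2]
  have hφ_ub : ∀ ε > (0:ℝ), ∃ δ > (0:ℝ), ∀ t, 0 ≤ t → t < δ → φ t ≤ ε * t := by
    intro ε hε
    obtain ⟨δ₀, hδ₀, hδ₀'⟩ := hlim (ε/2) (by linarith)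
    refine ⟨δ₀/4, by positivity, fun t ht htδ => ?_⟩
    have key : ∀ s ∈ Icc (0:ℝ) t, c s ≤ ε := by
      intro s hs
      rcases eq_or_lt_of_le hs.1 with h | h
      · rw [← h]; simpa [hc0] using hε.le
      · have h1 : g₁ (2*s) ≤ A (4*s) := by
          have := hg₁_le (2*s) (by linarith)
          simpa [show 2*(2*s) = 4*s by ring] using this
        have h2 : A (4*s) ≤ ε/2 := hδ₀' _ (by linarith [hs.2])
        calc c s = 2 * g₁ (2*s) := rfl
          _ ≤ 2 * (ε/2) := by nlinarith [hg₁_nonneg (2*s)]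
          _ = ε := by ring
    calc φ t ≤ ∫ _s in (0:ℝ)..t, ε := by
          apply integral_mono_on ht (hc_cont.intervalIntegrable _ _) intervalIntegrable_const key
      _ = ε * t := by rw [intervalIntegral.integral_const, smul_eq_mul]; ring
  exact ⟨φ, c, hc_cont, hφderiv, hφ0, hc0, hc_nonneg, hφ_nonneg, hφ_lb, hφ_ub⟩

set_option maxHeartbeats 2000000 in
/-- If `f : ℝⁿ → ℝ` is lower semicontinuous, `x ∈ S^{n−1}`, and `v` is a regular
subgradient of `f` at `x`, then `Proj_x(v) = v − ⟨v, x⟩x` is a Riemannian Fréchet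
subgradient of `f` at `x` on the sphere. -/
theorem projection_of_regular_subgradient_is_RFrechet (n : ℕ) (hn : 1 ≤ n)
    (f : EuclideanSpace ℝ (Fin n) → ℝ) (hf : LowerSemicontinuous f)
    (x : EuclideanSpace ℝ (Fin n)) (hx : ‖x‖ = 1)
    (v : EuclideanSpace ℝ (Fin n)) (hv : IsRegularSubgradient f x v) :
    IsRFrechetSubgradient f x (sphereProj x v) := by
  classical
  obtain ⟨d1, hd1pos, hd1⟩ := hv 1 one_pos
  set ratio : EuclideanSpace ℝ (Fin n) → ℝ :=
    fun y => (f x + (inner ℝ v (y - x) : ℝ) - f y) / ‖y - x‖ with hratio_def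
  set S : ℝ → Set ℝ := fun t =>
    insert (0:ℝ) (ratio '' {y | y ≠ x ∧ ‖y - x‖ ≤ min t (d1/2)}) with hS_def
  set A : ℝ → ℝ := fun t => sSup (S t) with hA_def
  have hratio_le : ∀ ε > (0:ℝ), ∀ δ : ℝ,
      (∀ y, y ≠ x → ‖y - x‖ < δ → -ε * ‖y - x‖ ≤ f y - f x - (inner ℝ v (y - x) : ℝ)) →
      ∀ y, y ≠ x → ‖y - x‖ < δ → ratio y ≤ ε := by
    intro ε hε δ hδ y hy hyδ
    have hpos : (0:ℝ) < ‖y - x‖ := by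
      rw [norm_pos_iff]; exact sub_ne_zero.mpr hy
    rw [hratio_def]
    rw [div_le_iff₀ hpos]
    have := hδ y hy hyδ
    linarith
  have hr1 : ∀ y, y ≠ x → ‖y - x‖ < d1 → ratio y ≤ 1 :=
    hratio_le 1 one_pos d1 hd1
  have hS_ne : ∀ t, (S t).Nonempty := fun t => ⟨0, mem_insert 0 _⟩
  have hbdd : ∀ t, BddAbove (S t) := by
    intro t
    refine ⟨1, fun r hr => ?_⟩
    rcases hr with rfl | ⟨y, ⟨hy, hyle⟩, rfl⟩
    · norm_num
    · exact hr1 y hy (lt_of_le_of_lt (le_trans hyle (min_le_right _ _)) (by linarith))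
  have hA_nonneg : ∀ t, 0 ≤ A t := fun t => le_csSup (hbdd t) (mem_insert _ _)
  have hA_one : ∀ t, A t ≤ 1 := by
    intro t
    apply csSup_le (hS_ne t)
    intro r hr
    rcases hr with rfl | ⟨y, ⟨hy, hyle⟩, rfl⟩
    · norm_num
    · exact hr1 y hy (lt_of_le_of_lt (le_trans hyle (min_le_right _ _)) (by linarith))
  have hA_mono : Monotone A := by
    intro s t hst
    apply csSup_le_csSup (hbdd t) (hS_ne s)
    apply insert_subset_insert
    apply image_mono
    intro y hy
    exact ⟨hy.1, le_trans hy.2 (min_le_min hst le_rfl)⟩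
  have hA_zero : ∀ t ≤ (0:ℝ), A t = 0 := by
    intro t ht
    have hempty : {y : EuclideanSpace ℝ (Fin n) | y ≠ x ∧ ‖y - x‖ ≤ min t (d1/2)} = ∅ := by
      ext y
      simp only [mem_setOf_eq, mem_empty_iff_false, iff_false, not_and]
      intro hy hle
      have hpos : (0:ℝ) < ‖y - x‖ := by rw [norm_pos_iff]; exact sub_ne_zero.mpr hy
      have : ‖y - x‖ ≤ t := le_trans hle (min_le_left _ _)
      linarith
    rw [hA_def]
    simp only [hS_def, hempty, image_empty, insert_empty_eq]
    exact csSup_singleton 0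
  have hA_lim : ∀ ε > (0:ℝ), ∃ δ > (0:ℝ), ∀ t < δ, A t ≤ ε := by
    intro ε hε
    obtain ⟨δε, hδεpos, hδε⟩ := hv ε hε
    refine ⟨δε, hδεpos, fun t ht => ?_⟩
    apply csSup_le (hS_ne t)
    intro r hr
    rcases hr with rfl | ⟨y, ⟨hy, hyle⟩, rfl⟩
    · exact hε.le
    · exact hratio_le ε hε δε hδε y hy
        (lt_of_le_of_lt (le_trans hyle (min_le_left _ _)) ht)
  obtain ⟨φ, c, hc_cont, hφderiv, hφ0, hc0, hc_nonneg, hφ_nonneg, hφ_lb, hφ_ub⟩ :=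
    exists_penalty A hA_mono hA_zero hA_nonneg hA_one hA_lim
  set h : EuclideanSpace ℝ (Fin n) → ℝ :=
    fun y => (inner ℝ v (y - x) : ℝ) - φ ‖y - x‖ with hh_def
  set D : EuclideanSpace ℝ (Fin n) → (EuclideanSpace ℝ (Fin n) →L[ℝ] ℝ) :=
    fun y => innerSL ℝ v - (c ‖y - x‖ * ‖y - x‖⁻¹) • innerSL ℝ (y - x) with hD_def
  have hlin : ∀ y : EuclideanSpace ℝ (Fin n),
      HasFDerivAt (fun z : EuclideanSpace ℝ (Fin n) => (inner ℝ v (z - x) : ℝ))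
        (innerSL ℝ v) y := by
    intro y
    have h1 : HasFDerivAt (fun z : EuclideanSpace ℝ (Fin n) => z - x)
        (ContinuousLinearMap.id ℝ _) y := (hasFDerivAt_id y).sub_const x
    have h2 := (innerSL ℝ v).hasFDerivAt.comp y h1
    exact h2
  have hΦderiv : ∀ y : EuclideanSpace ℝ (Fin n), y ≠ x →
      HasFDerivAt (fun z : EuclideanSpace ℝ (Fin n) => φ ‖z - x‖)
        ((c ‖y - x‖ * ‖y - x‖⁻¹) • innerSL ℝ (y - x)) y := by
    intro y hy
    have hne : y - x ≠ 0 := sub_ne_zero.mpr hy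
    have ht : (0:ℝ) < ‖y - x‖ := norm_pos_iff.mpr hne
    have h1 : HasFDerivAt (fun z : EuclideanSpace ℝ (Fin n) => z - x)
        (ContinuousLinearMap.id ℝ _) y := (hasFDerivAt_id y).sub_const x
    have h2 := h1.norm_sq
    have hsq_ne : ‖y - x‖ ^ 2 ≠ 0 := by positivity
    have h3 := h2.sqrt (by simpa using hsq_ne)
    have hfun : (fun z : EuclideanSpace ℝ (Fin n) => Real.sqrt (‖z - x‖ ^ 2))
        = fun z : EuclideanSpace ℝ (Fin n) => ‖z - x‖ := by
      funext z; exact Real.sqrt_sq (norm_nonneg _)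
    rw [hfun] at h3
    have h4 := (hφderiv ‖y - x‖).comp_hasFDerivAt y h3
    refine h4.congr_fderiv ?_
    ext w
    have hsqrt : Real.sqrt (‖y - x‖ ^ 2) = ‖y - x‖ := Real.sqrt_sq (norm_nonneg _)
    simp only [ContinuousLinearMap.smul_apply, ContinuousLinearMap.coe_smul',
      Pi.smul_apply, ContinuousLinearMap.coe_comp', Function.comp_apply,
      ContinuousLinearMap.coe_id', id_eq, smul_eq_mul, innerSL_apply_apply, hsqrt,
      ContinuousLinearMap.smul_apply]
    rw [nsmul_eq_mul]
    have htne : ‖y - x‖ ≠ 0 := ht.ne'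
    field_simp
    ring
  have hΦx : HasFDerivAt (fun z : EuclideanSpace ℝ (Fin n) => φ ‖z - x‖)
      (0 : EuclideanSpace ℝ (Fin n) →L[ℝ] ℝ) x := by
    rw [hasFDerivAt_iff_isLittleO_nhds_zero]
    rw [Asymptotics.isLittleO_iff]
    intro ε hε
    obtain ⟨δ, hδpos, hδ⟩ := hφ_ub ε hε
    filter_upwards [Metric.ball_mem_nhds (0 : EuclideanSpace ℝ (Fin n)) hδpos] with w hw
    have hwδ : ‖w‖ < δ := by simpa using mem_ball_zero_iff.mp hw
    have h1 : φ ‖w‖ ≤ ε * ‖w‖ := hδ ‖w‖ (norm_nonneg _) hwδ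
    have h2 : 0 ≤ φ ‖w‖ := hφ_nonneg _ (norm_nonneg _)
    simp only [add_sub_cancel_left, sub_self, norm_zero, hφ0, sub_zero,
      ContinuousLinearMap.zero_apply]
    rw [Real.norm_eq_abs, abs_of_nonneg h2]
    exact h1
  have hDx : D x = innerSL ℝ v := by
    rw [hD_def]; simp
  have hkey : ∀ y, HasFDerivAt h (D y) y := by
    intro y
    rcases eq_or_ne y x with heq | hy
    · rw [heq, hDx]
      have := (hlin x).sub hΦx
      exact this.congr_fderiv (sub_zero _)
    · exact (hlin y).sub (hΦderiv y hy)
  have hdiff : Differentiable ℝ h := fun y => (hkey y).differentiableAt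
  have hfderiv : fderiv ℝ h = D := funext fun y => (hkey y).fderiv
  have hDcont : Continuous D := by
    rw [continuous_iff_continuousAt]
    intro y
    rcases eq_or_ne y x with heq | hy
    · rw [heq]
      rw [ContinuousAt, hDx]
      have hb : ∀ z, ‖D z - innerSL ℝ v‖ ≤ c ‖z - x‖ := by
        intro z
        have heq : D z - innerSL ℝ v
            = -((c ‖z - x‖ * ‖z - x‖⁻¹) • innerSL ℝ (z - x)) := by
          simp only [hD_def]
          exact sub_sub_cancel_left _ _
        rw [heq, norm_neg]
        refine le_trans (norm_smul_le _ (innerSL ℝ (z - x))) ?_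
        rw [innerSL_apply_norm]
        rcases eq_or_ne (z - x) 0 with h0 | h0
        · simp [h0, hc0]
        · have hpos : 0 < ‖z - x‖ := norm_pos_iff.mpr h0
          rw [Real.norm_eq_abs,
            abs_of_nonneg (mul_nonneg (hc_nonneg _) (inv_nonneg.mpr hpos.le)),
            mul_assoc, inv_mul_cancel₀ hpos.ne', mul_one]
      have h1 : Tendsto (fun z : EuclideanSpace ℝ (Fin n) => c ‖z - x‖) (𝓝 x) (𝓝 0) := by
        have hcont : ContinuousAt (fun z : EuclideanSpace ℝ (Fin n) => c ‖z - x‖) x :=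
          (hc_cont.comp ((continuous_id.sub continuous_const).norm)).continuousAt
        simpa [hc0] using hcont.tendsto
      have := squeeze_zero_norm hb h1
      exact tendsto_sub_nhds_zero_iff.mp this
    · rw [hD_def]
      apply ContinuousAt.sub continuousAt_const
      have hnorm_cont : Continuous (fun z : EuclideanSpace ℝ (Fin n) => ‖z - x‖) :=
        (continuous_id.sub continuous_const).norm
      apply ContinuousAt.fun_smul
      · apply ContinuousAt.fun_mul
        · exact (hc_cont.comp hnorm_cont).continuousAt
        · apply ContinuousAt.inv₀ hnorm_cont.continuousAt
          rw [norm_ne_zero_iff]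
          exact sub_ne_zero.mpr hy
      · exact ((innerSL ℝ (E := EuclideanSpace ℝ (Fin n))).continuous.comp
          (continuous_id.sub continuous_const)).continuousAt
  have hC1 : ContDiff ℝ 1 h := by
    rw [contDiff_one_iff_fderiv]
    exact ⟨hdiff, by rw [hfderiv]; exact hDcont⟩
  have hgrad : gradient h x = v := by
    have hfd : HasFDerivAt h (innerSL ℝ v) x := by
      have := hkey x; rwa [hDx] at this
    have hg : HasGradientAt h v x := by
      rw [hasGradientAt_iff_hasFDerivAt]
      exact hfd
    exact hg.gradient
  have hhx : h x = 0 := by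
    simp [hh_def, hφ0]
  refine ⟨1, one_pos, h, hC1.contDiffOn, ⟨d1/2, by positivity, ?_⟩, ?_⟩
  · intro y hy1 hylt
    rcases eq_or_ne y x with rfl | hyx
    · exact le_rfl
    · have ht : (0:ℝ) < ‖y - x‖ := by rw [norm_pos_iff]; exact sub_ne_zero.mpr hyx
      have hmem : ratio y ∈ S ‖y - x‖ :=
        mem_insert_of_mem _ ⟨y, ⟨hyx, le_min le_rfl hylt.le⟩, rfl⟩
      have h1 : ratio y ≤ A ‖y - x‖ := le_csSup (hbdd _) hmem
      have h2 : ‖y - x‖ * A ‖y - x‖ ≤ φ ‖y - x‖ := hφ_lb _ ht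
      have h3 : f x + (inner ℝ v (y - x) : ℝ) - f y = ‖y - x‖ * ratio y := by
        rw [hratio_def]; field_simp
      have h4 : ‖y - x‖ * ratio y ≤ ‖y - x‖ * A ‖y - x‖ :=
        mul_le_mul_of_nonneg_left h1 ht.le
      rw [hhx, hh_def]
      simp only
      linarith
  · rw [hgrad]
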